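/- Let J be a unital Jordan algebra over a field of characteristic not 2 with associated Jordan pair V = (J,J), and let Γ be a G-grading on V (G abelian) such that 1⁺ is a homogeneous element. Then deg(1⁺) + deg(1⁻) = 0, and the shift Γ^[g] with g = -deg(1⁺) satisfies deg_g(x⁺) = deg_g(x⁻) for all homogeneous x, and its restriction to J = V⁺ is a G-grading on the Jordan algebra J. -/
import Mathlib


/-- Let `J` be a unital Jordan algebra over a field of characteristic not 2 and
`V = (J,J)` its associated Jordan pair, with trilinear products given (up to the
invertible factor 2) by `T x y z = x(yz) + z(xy) - (xz)y`.  If `Γ` is a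
`G`-grading on `V` such that `1⁺` is homogeneous of degree `e`, then
`deg(1⁻) = -e` (so `deg 1⁺ + deg 1⁻ = 0`), the shift by `g = -e` satisfies
`deg_g(x⁺) = deg_g(x⁻)` (i.e. `V⁺_h = V⁻_{h-2e}` for all `h`), and the shifted
grading restricts to a `G`-grading of the Jordan algebra `J = V⁺`. -/
theorem stmt_8 (F : Type*) [Field F] (hchar : (2 : F) ≠ 0)
    (J : Type*) [NonAssocRing J] [Module F J]
    (mul_comm' : ∀ a b : J, a * b = b * a)
    (jordan : ∀ a b : J, (a * b) * (a * a) = a * (b * (a * a)))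
    (G : Type*) [AddCommGroup G] [DecidableEq G]
    (gp gm : G → Submodule F J)
    (int_p : DirectSum.IsInternal gp) (int_m : DirectSum.IsInternal gm)
    (mul_p : ∀ g h k : G, ∀ x ∈ gp g, ∀ y ∈ gm h, ∀ z ∈ gp k,
      x * (y * z) + z * (x * y) - (x * z) * y ∈ gp (g + h + k))
    (mul_m : ∀ g h k : G, ∀ x ∈ gm g, ∀ y ∈ gp h, ∀ z ∈ gm k,
      x * (y * z) + z * (x * y) - (x * z) * y ∈ gm (g + h + k))
    (e : G) (he : (1 : J) ∈ gp e) :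
    (1 : J) ∈ gm (-e) ∧
    (∀ h : G, gp h = gm (h - (e + e))) ∧
    (∀ k l : G, ∀ x ∈ gp (k + e), ∀ y ∈ gp (l + e), x * y ∈ gp (k + l + e)) := by
  classical
  -- `Q_{1⁺}` : every element of `gm h` lies in `gp (e + h + e)`
  have Qp : ∀ h : G, ∀ y ∈ gm h, y ∈ gp (e + h + e) := by
    intro h y hy
    have := mul_p e h e 1 he y hy 1 he
    simpa [one_mul, mul_one, add_sub_cancel_right] using this
  -- decompose `1` with respect to `gm`
  obtain ⟨v, hv⟩ := int_m.surjective 1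
  have hsum : ∑ k ∈ DFinsupp.support v, ((v k : J)) = 1 := by
    calc ∑ k ∈ DFinsupp.support v, ((v k : J))
        = DirectSum.coeAddMonoidHom gm
            (∑ k ∈ DFinsupp.support v, DirectSum.of (fun k => ↥(gm k)) k (v k)) := by
          rw [map_sum]
          simp [DirectSum.coeAddMonoidHom_of]
      _ = 1 := by rw [DirectSum.sum_support_of]; exact hv
  set s : Finset G := insert (-e) (DFinsupp.support v) with hs
  have hsum' : ∑ k ∈ s, ((v k : J)) = 1 := by
    rw [hs, Finset.sum_insert_of_eq_zero_if_notMem, hsum]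
    intro hne
    simp [DFinsupp.notMem_support_iff.mp hne]
  have hrest : ∑ k ∈ s.erase (-e), ((v k : J)) = 1 - (v (-e) : J) := by
    rw [Finset.sum_erase_eq_sub (Finset.mem_insert_self _ _), hsum']
  have hz1 : (1 : J) - (v (-e) : J) ∈ gp e := by
    have h2 : ((v (-e) : J)) ∈ gp e := by
      have := Qp (-e) (v (-e)) (v (-e)).2
      have hidx : e + -e + e = e := by abel
      rwa [hidx] at this
    exact Submodule.sub_mem _ he h2
  have hz2 : (1 : J) - (v (-e) : J) ∈ ⨆ (j) (_ : j ≠ e), gp j := by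
    rw [← hrest]
    refine Submodule.sum_mem _ ?_
    intro k hk
    have hkne : k ≠ -e := Finset.ne_of_mem_erase hk
    have hmem : ((v k : J)) ∈ gp (e + k + e) := Qp k (v k) (v k).2
    have hne : e + k + e ≠ e := by
      intro hEq
      apply hkne
      have h0 : e + k + e = 0 + e := by rw [hEq, zero_add]
      have h1 : e + k = 0 := (add_left_inj e).mp h0
      exact (neg_eq_of_add_eq_zero_right h1).symm
    exact le_iSup₂ (f := fun (j : G) (_ : j ≠ e) => gp j) _ hne hmem
  have hzero : (1 : J) - (v (-e) : J) = 0 :=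
    Submodule.disjoint_def.mp (int_p.submodule_iSupIndep e) _ hz1 hz2
  have hone : ((v (-e) : J)) = 1 := (sub_eq_zero.mp hzero).symm
  have h1m : (1 : J) ∈ gm (-e) := hone ▸ (v (-e)).2
  -- part 2
  have hpm : ∀ h : G, gp h ≤ gm (h - (e + e)) := by
    intro h x hx
    have := mul_m (-e) h (-e) 1 h1m x hx 1 h1m
    have hx' : x ∈ gm (-e + h + -e) := by
      simpa [one_mul, mul_one, add_sub_cancel_right] using this
    have hidx : -e + h + -e = h - (e + e) := by abel
    rwa [hidx] at hx'
  have hmp : ∀ h : G, gm (h - (e + e)) ≤ gp h := by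
    intro h y hy
    have := Qp _ y hy
    have hidx : e + (h - (e + e)) + e = h := by abel
    rwa [hidx] at this
  refine ⟨h1m, fun h => le_antisymm (hpm h) (hmp h), ?_⟩
  -- part 3
  intro k l x hx y hy
  have := mul_p (k + e) (-e) (l + e) x hx 1 h1m y hy
  have hval : x * (1 * y) + y * (x * 1) - x * y * 1 = x * y := by
    rw [one_mul, mul_one, mul_one, mul_comm' y x]
    exact add_sub_cancel_right _ _
  rw [hval] at this
  have hidx : k + e + -e + (l + e) = k + l + e := by abel
  rwa [hidx] at this
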